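/- γ₂(Tₙ) ≤ ⌊log₂ n⌋ + 1, where Tₙ is the n×n lower triangular all-ones matrix. -/

import Mathlib

open Matrix Real

/-- `‖B‖_{2→∞}`: the largest Euclidean norm of a row of `B`. -/
noncomputable def rowNorm {m n : Type*} [Fintype m] [Fintype n] (B : Matrix m n ℝ) : ℝ :=
  ⨆ i, Real.sqrt (∑ j, B i j ^ 2)

/-- `‖C‖_{1→2}`: the largest Euclidean norm of a column of `C`. -/
noncomputable def colNorm {m n : Type*} [Fintype m] [Fintype n] (C : Matrix m n ℝ) : ℝ :=
  ⨆ j, Real.sqrt (∑ i, C i j ^ 2)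

/-- The `γ₂` factorization norm of a real matrix. -/
noncomputable def gamma2 {m n : Type*} [Fintype m] [Fintype n] (A : Matrix m n ℝ) : ℝ :=
  sInf {t | ∃ (k : ℕ) (B : Matrix m (Fin k) ℝ) (C : Matrix (Fin k) n ℝ),
    A = B * C ∧ t = rowNorm B * colNorm C}

/-- `Tₙ`: the n×n lower triangular all-ones matrix. -/
def T (n : ℕ) : Matrix (Fin n) (Fin n) ℝ :=
  Matrix.of fun i j => if j ≤ i then 1 else 0

/- ### Auxiliary lemmas -/

lemma Gtle.testBit_div_pow (x k b : ℕ) : (x / 2^k).testBit b = x.testBit (k + b) := by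
  rw [← Nat.shiftRight_eq_div_pow, Nat.testBit_shiftRight]

lemma Gtle.highEq_iff (a j l : ℕ) :
    a / 2^(l+1) = j / 2^(l+1) ↔ ∀ b, l < b → a.testBit b = j.testBit b := by
  constructor
  · intro h b hb
    have hb' : b = (l+1) + (b - (l+1)) := by omega
    rw [hb', ← Gtle.testBit_div_pow, ← Gtle.testBit_div_pow, h]
  · intro h
    apply Nat.eq_of_testBit_eq
    intro b
    rw [Gtle.testBit_div_pow, Gtle.testBit_div_pow]
    exact h _ (by omega)

lemma Gtle.core (L a j : ℕ) (ha : a < 2^L) (hj : j < 2^L) :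
    ∑ l ∈ Finset.range L,
      (if (a / 2^(l+1) = j / 2^(l+1) ∧ a.testBit l = true ∧ j.testBit l = false)
        then (1:ℝ) else 0) = if j < a then 1 else 0 := by
  by_cases hja : j < a
  · have hne : a ≠ j := by omega
    have hd0 : a ^^^ j ≠ 0 := by
      intro h; apply hne; apply Nat.eq_of_testBit_eq; intro b
      have := congrArg (fun x => Nat.testBit x b) h
      cases h1 : a.testBit b <;> cases h2 : j.testBit b <;> simp_all [Nat.testBit_xor]
    set m := Nat.log 2 (a ^^^ j) with hm
    have hdlt : a ^^^ j < 2 ^ (m+1) := Nat.lt_pow_succ_log_self one_lt_two _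
    have hdge : 2 ^ m ≤ a ^^^ j := Nat.pow_log_le_self 2 hd0
    have hpos : 0 < 2^m := Nat.two_pow_pos m
    have hdiv : (a ^^^ j) / 2^m = 1 := by
      have h1 : 1 ≤ (a ^^^ j) / 2^m := (Nat.le_div_iff_mul_le hpos).2 (by omega)
      have h2 : (a ^^^ j) / 2^m < 2 := (Nat.div_lt_iff_lt_mul hpos).2 (by
        have : (2:ℕ)^(m+1) = 2^m * 2 := by ring
        omega)
      omega
    have hdbit : (a ^^^ j).testBit m = true := by
      rw [Nat.testBit_eq_decide_div_mod_eq, hdiv]; decide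
    have hhigh : ∀ b, m < b → a.testBit b = j.testBit b := by
      intro b hb
      have hlt : a ^^^ j < 2 ^ b :=
        lt_of_lt_of_le hdlt (Nat.pow_le_pow_right (by norm_num) hb)
      have hz : (a ^^^ j).testBit b = false := Nat.testBit_lt_two_pow hlt
      rw [Nat.testBit_xor] at hz
      cases h1 : a.testBit b <;> cases h2 : j.testBit b <;> simp_all
    have hxm : (a.testBit m ^^ j.testBit m) = true := by
      rw [← Nat.testBit_xor]; exact hdbit
    have hbits : a.testBit m = true ∧ j.testBit m = false := by
      cases h1 : a.testBit m <;> cases h2 : j.testBit m <;> simp_all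
      exact absurd (Nat.lt_of_testBit m h1 h2 hhigh) (by omega)
    have hmL : m < L := Nat.log_lt_of_lt_pow hd0 (Nat.xor_lt_two_pow ha hj)
    rw [Finset.sum_eq_single_of_mem m (Finset.mem_range.2 hmL)]
    · rw [if_pos ⟨(Gtle.highEq_iff a j m).2 (fun b hb => hhigh b hb), hbits.1, hbits.2⟩,
        if_pos hja]
    · intro l _ hlm
      rcases lt_or_gt_of_ne hlm with h | h
      · apply if_neg
        rintro ⟨hq, _, _⟩
        have := (Gtle.highEq_iff a j l).1 hq m (by omega)
        rw [hbits.1, hbits.2] at this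
        simp at this
      · apply if_neg
        rintro ⟨_, hb1, hb2⟩
        have := hhigh l h
        rw [hb1, hb2] at this
        simp at this
  · rw [if_neg hja]
    apply Finset.sum_eq_zero
    intro l _
    apply if_neg
    rintro ⟨hq, hb1, hb2⟩
    exact hja (Nat.lt_of_testBit l hb2 hb1
      (fun b hb => ((Gtle.highEq_iff a j l).1 hq b hb).symm))

lemma Gtle.sum_ind {n : ℕ} (A : ℕ) (hA : A < n) (c : Prop) [Decidable c] :
    ∑ p : Fin n, (if (p.val = A ∧ c) then (1:ℝ) else 0) = if c then 1 else 0 := by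
  by_cases hc : c
  · simp only [hc, and_true, if_true]
    have h := Finset.sum_ite_eq' (Finset.univ : Finset (Fin n)) ⟨A, hA⟩ (fun _ => (1:ℝ))
    simp only [Finset.mem_univ, if_true] at h
    rw [← h]
    apply Finset.sum_congr rfl
    intro p _
    congr 1
    simp [Fin.ext_iff]
  · simp [hc]

lemma Gtle.prod_ind {n : ℕ} (A J : ℕ) (hA : A < n) (cA cJ : Prop)
    [Decidable cA] [Decidable cJ] :
    ∑ p : Fin n, (if (p.val = A ∧ cA) then (1:ℝ) else 0) * (if (p.val = J ∧ cJ) then 1 else 0)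
      = if (A = J ∧ cA ∧ cJ) then 1 else 0 := by
  have key : ∀ p : Fin n,
      (if (p.val = A ∧ cA) then (1:ℝ) else 0) * (if (p.val = J ∧ cJ) then 1 else 0)
        = if (p.val = A ∧ (A = J ∧ cA ∧ cJ)) then 1 else 0 := by
    intro p
    by_cases h3 : ((p:ℕ) = A ∧ A = J ∧ cA ∧ cJ)
    · obtain ⟨hp, hAJ, hcA, hcJ⟩ := h3
      rw [if_pos (⟨hp, hAJ, hcA, hcJ⟩ : (p:ℕ) = A ∧ A = J ∧ cA ∧ cJ),
        if_pos ⟨hp, hcA⟩, if_pos ⟨hp.trans hAJ, hcJ⟩]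
      norm_num
    · rw [if_neg h3]
      by_cases h1 : ((p:ℕ) = A ∧ cA)
      · have h2 : ¬((p:ℕ) = J ∧ cJ) := fun h2 => h3 ⟨h1.1, h1.1.symm.trans h2.1, h1.2, h2.2⟩
        rw [if_neg h2, mul_zero]
      · rw [if_neg h1, zero_mul]
  rw [Finset.sum_congr rfl (fun p _ => key p), Gtle.sum_ind A hA _]

/-- The left factor: columns are indexed by (level, block) pairs. -/
noncomputable def Gtle.Bmat (n L : ℕ) : Matrix (Fin n) (Fin (L * n)) ℝ := fun i q =>
  if ((finProdFinEquiv.symm q).2.val = (i.val + 1) / 2 ^ ((finProdFinEquiv.symm q).1.val + 1)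
      ∧ (i.val + 1).testBit (finProdFinEquiv.symm q).1.val = true) then 1 else 0

/-- The right factor. -/
noncomputable def Gtle.Cmat (n L : ℕ) : Matrix (Fin (L * n)) (Fin n) ℝ := fun q j =>
  if ((finProdFinEquiv.symm q).2.val = j.val / 2 ^ ((finProdFinEquiv.symm q).1.val + 1)
      ∧ j.val.testBit (finProdFinEquiv.symm q).1.val = false) then 1 else 0

/-- `γ₂(Tₙ) ≤ ⌊log₂ n⌋ + 1`. -/
theorem gamma2_T_le (n : ℕ) (hn : 1 ≤ n) :
    gamma2 (T n) ≤ (Nat.log 2 n : ℝ) + 1 := by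
  haveI : Nonempty (Fin n) := ⟨⟨0, hn⟩⟩
  set L := Nat.log 2 n + 1 with hLdef
  have hnL : n < 2 ^ L := Nat.lt_pow_succ_log_self one_lt_two n
  set B := Gtle.Bmat n L with hB
  set C := Gtle.Cmat n L with hC
  have hAlt : ∀ (i : Fin n) (l : ℕ), (i.val + 1) / 2 ^ (l + 1) < n := by
    intro i l
    have h2 : (2:ℕ) ≤ 2 ^ (l + 1) := by
      calc (2:ℕ) = 2 ^ 1 := rfl
        _ ≤ 2 ^ (l+1) := Nat.pow_le_pow_right (by norm_num) (by omega)
    have h3 : (i.val + 1) / 2 ^ (l+1) ≤ (i.val + 1) / 2 :=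
      Nat.div_le_div_left h2 (by norm_num)
    have h4 : (i.val + 1) / 2 ≤ i.val := by omega
    have h5 := i.isLt
    omega
  have hJlt : ∀ (j : Fin n) (l : ℕ), j.val / 2 ^ (l + 1) < n :=
    fun j l => lt_of_le_of_lt (Nat.div_le_self _ _) j.isLt
  -- the key product computation
  have hBC : ∀ i j : Fin n, ∑ q, B i q * C q j = if (j.val < i.val + 1) then 1 else 0 := by
    intro i j
    have hstep : ∑ q, B i q * C q j =
        ∑ x : Fin L × Fin n,
          (if (x.2.val = (i.val+1)/2^(x.1.val+1) ∧ (i.val+1).testBit x.1.val = true)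
            then (1:ℝ) else 0) *
          (if (x.2.val = j.val/2^(x.1.val+1) ∧ j.val.testBit x.1.val = false)
            then 1 else 0) :=
      (Fintype.sum_equiv finProdFinEquiv _ _ (fun x => by
        simp [hB, hC, Gtle.Bmat, Gtle.Cmat])).symm
    rw [hstep, Fintype.sum_prod_type]
    have hinner : ∀ l : Fin L,
        (∑ p : Fin n,
          (if (p.val = (i.val+1)/2^(l.val+1) ∧ (i.val+1).testBit l.val = true)
            then (1:ℝ) else 0) *
          (if (p.val = j.val/2^(l.val+1) ∧ j.val.testBit l.val = false) then 1 else 0))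
        = if ((i.val+1)/2^(l.val+1) = j.val/2^(l.val+1) ∧ (i.val+1).testBit l.val = true
            ∧ j.val.testBit l.val = false) then 1 else 0 :=
      fun l => Gtle.prod_ind _ _ (hAlt i l.val) _ _
    rw [Finset.sum_congr rfl (fun l _ => hinner l),
      Fin.sum_univ_eq_sum_range (fun l =>
        if ((i.val+1)/2^(l+1) = j.val/2^(l+1) ∧ (i.val+1).testBit l = true
          ∧ j.val.testBit l = false) then (1:ℝ) else 0) L]
    exact Gtle.core L (i.val+1) j.val (by have := i.isLt; omega) (by have := j.isLt; omega)
  have hfact : T n = B * C := by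
    ext i j
    rw [Matrix.mul_apply, hBC i j]
    show (if j ≤ i then (1:ℝ) else 0) = _
    by_cases h : j ≤ i
    · rw [if_pos h, if_pos (by have := Fin.le_def.1 h; omega)]
    · rw [if_neg h, if_neg (by have := Fin.lt_def.1 (lt_of_not_ge h); omega)]
  have hsq : ∀ (c : Prop) (inst : Decidable c), (if c then (1:ℝ) else 0)^2 = if c then 1 else 0 := by
    intro c inst; split_ifs <;> norm_num
  -- row norm bound
  have hrow : rowNorm B ≤ Real.sqrt L := by
    apply ciSup_le
    intro i
    apply Real.sqrt_le_sqrt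
    calc ∑ q, B i q ^ 2
        = ∑ x : Fin L × Fin n,
          (if (x.2.val = (i.val+1)/2^(x.1.val+1) ∧ (i.val+1).testBit x.1.val = true)
            then (1:ℝ) else 0) :=
          (Fintype.sum_equiv finProdFinEquiv _ _ (fun x => by
            rw [← hsq _ _]
            congr 1
            simp [hB, Gtle.Bmat])).symm
      _ = ∑ l : Fin L, ∑ p : Fin n,
          (if (p.val = (i.val+1)/2^(l.val+1) ∧ (i.val+1).testBit l.val = true)
            then (1:ℝ) else 0) := Fintype.sum_prod_type _
      _ = ∑ l : Fin L, (if ((i.val+1).testBit l.val = true) then (1:ℝ) else 0) :=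
          Finset.sum_congr rfl (fun l _ => Gtle.sum_ind _ (hAlt i l.val) _)
      _ ≤ ∑ _l : Fin L, 1 := Finset.sum_le_sum (fun l _ => by split_ifs <;> norm_num)
      _ = (L : ℝ) := by simp
  -- column norm bound
  have hcol : colNorm C ≤ Real.sqrt L := by
    apply ciSup_le
    intro j
    apply Real.sqrt_le_sqrt
    calc ∑ q, C q j ^ 2
        = ∑ x : Fin L × Fin n,
          (if (x.2.val = j.val/2^(x.1.val+1) ∧ j.val.testBit x.1.val = false)
            then (1:ℝ) else 0) :=
          (Fintype.sum_equiv finProdFinEquiv _ _ (fun x => by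
            rw [← hsq _ _]
            congr 1
            simp [hC, Gtle.Cmat])).symm
      _ = ∑ l : Fin L, ∑ p : Fin n,
          (if (p.val = j.val/2^(l.val+1) ∧ j.val.testBit l.val = false)
            then (1:ℝ) else 0) := Fintype.sum_prod_type _
      _ = ∑ l : Fin L, (if (j.val.testBit l.val = false) then (1:ℝ) else 0) :=
          Finset.sum_congr rfl (fun l _ => Gtle.sum_ind _ (hJlt j l.val) _)
      _ ≤ ∑ _l : Fin L, 1 := Finset.sum_le_sum (fun l _ => by split_ifs <;> norm_num)
      _ = (L : ℝ) := by simp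
  have hC0 : 0 ≤ colNorm C := Real.iSup_nonneg (fun _ => Real.sqrt_nonneg _)
  have hbdd : BddBelow {t | ∃ (k : ℕ) (B : Matrix (Fin n) (Fin k) ℝ)
      (C : Matrix (Fin k) (Fin n) ℝ), T n = B * C ∧ t = rowNorm B * colNorm C} := by
    refine ⟨0, ?_⟩
    rintro t ⟨k, B', C', -, rfl⟩
    exact mul_nonneg (Real.iSup_nonneg fun _ => Real.sqrt_nonneg _)
      (Real.iSup_nonneg fun _ => Real.sqrt_nonneg _)
  have hmem : rowNorm B * colNorm C ∈ {t | ∃ (k : ℕ) (B : Matrix (Fin n) (Fin k) ℝ)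
      (C : Matrix (Fin k) (Fin n) ℝ), T n = B * C ∧ t = rowNorm B * colNorm C} :=
    ⟨L * n, B, C, hfact, rfl⟩
  calc gamma2 (T n) ≤ rowNorm B * colNorm C := csInf_le hbdd hmem
    _ ≤ Real.sqrt L * Real.sqrt L :=
        mul_le_mul hrow hcol hC0 (Real.sqrt_nonneg _)
    _ = (L : ℝ) := Real.mul_self_sqrt (by positivity)
    _ = (Nat.log 2 n : ℝ) + 1 := by rw [hLdef]; push_cast; ring
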